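/- (IPW identification of the CATE.) On a finite probability space, let Y^0, Y^1 be potential outcomes, S, A ∈ {0,1}, Y = A·Y^1 + (1−A)·Y^0 on the event {S=1} (consistency), X a discrete covariate, and W = f(X) a coarsened covariate (f measurable). Assume: (i) mean exchangeability over A in the trial: E[Y^a | X=x, S=1, A=a] = E[Y^a | X=x, S=1] for a ∈ {0,1} and all relevant x; (ii) mean exchangeability over S: E[Y^1 − Y^0 | X=x, S=1] = E[Y^1 − Y^0 | X=x]; (iii) positivity: p(x) = P[S=1|X=x] > 0 and e_1(x) = P[A=1|X=x,S=1] ∈ (0,1) on the support of X. Then for every w in the support of W: E[Y^1 − Y^0 | W=w] = E[ S·(A − e_1(X)) / (p(X)·e_1(X)·(1−e_1(X))) · Y | W=w ]. -/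

import Mathlib

open scoped Classical
open Finset

/-- Probability of an event on a finite probability space with weights `P`. -/
noncomputable def prW {Ω : Type*} [Fintype Ω] (P : Ω → ℝ) (E : Ω → Prop) : ℝ :=
  ∑ ω, if E ω then P ω else 0

/-- Conditional expectation of `f` given the event `E`: `E[f · 1_E] / P(E)`. -/
noncomputable def cexp {Ω : Type*} [Fintype Ω] (P : Ω → ℝ) (f : Ω → ℝ) (E : Ω → Prop) : ℝ :=
  (∑ ω, if E ω then P ω * f ω else 0) / prW P E

section Helpers
variable {Ω : Type*} [Fintype Ω]

noncomputable def numW (P : Ω → ℝ) (g : Ω → ℝ) (E : Ω → Prop) : ℝ :=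
  ∑ ω, if E ω then P ω * g ω else 0

lemma cexp_eq_numW_div (P g : Ω → ℝ) (E : Ω → Prop) :
    cexp P g E = numW P g E / prW P E := rfl

lemma prW_nonneg (P : Ω → ℝ) (hP0 : ∀ ω, 0 ≤ P ω) (E : Ω → Prop) : 0 ≤ prW P E := by
  unfold prW
  refine Finset.sum_nonneg fun ω _ => ?_
  by_cases h : E ω <;> simp [h, hP0 ω]

lemma prW_zero_imp (P : Ω → ℝ) (hP0 : ∀ ω, 0 ≤ P ω) (E : Ω → Prop)
    (hE : prW P E = 0) : ∀ ω, E ω → P ω = 0 := by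
  intro ω hω
  unfold prW at hE
  have := (Finset.sum_eq_zero_iff_of_nonneg (fun ω _ => by
    by_cases h : E ω <;> simp [h, hP0 ω])).mp hE ω (Finset.mem_univ ω)
  simpa [hω] using this

lemma numW_zero (P g : Ω → ℝ) (E : Ω → Prop) (h : ∀ ω, E ω → P ω = 0) :
    numW P g E = 0 := by
  unfold numW
  refine Finset.sum_eq_zero fun ω _ => ?_
  by_cases hE : E ω
  · simp [hE, h ω hE]
  · simp [hE]

lemma numW_sub (P Y1 Y0 : Ω → ℝ) (E : Ω → Prop) :
    numW P (fun ω => Y1 ω - Y0 ω) E = numW P Y1 E - numW P Y0 E := by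
  unfold numW
  rw [← Finset.sum_sub_distrib]
  refine Finset.sum_congr rfl fun ω _ => ?_
  by_cases h : E ω <;> simp [h] <;> ring

lemma numW_indS {𝒳 : Type*} (P S : Ω → ℝ) (X : Ω → 𝒳) (x : 𝒳) :
    numW P (fun ω => if S ω = 1 then 1 else 0) (fun ω => X ω = x)
      = prW P (fun ω => X ω = x ∧ S ω = 1) := by
  unfold numW prW
  refine Finset.sum_congr rfl fun ω _ => ?_
  by_cases h1 : X ω = x <;> by_cases h2 : S ω = 1 <;> simp [h1, h2]

lemma numW_indA {𝒳 : Type*} (P S A : Ω → ℝ) (X : Ω → 𝒳) (x : 𝒳) :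
    numW P (fun ω => if A ω = 1 then 1 else 0) (fun ω => X ω = x ∧ S ω = 1)
      = prW P (fun ω => X ω = x ∧ S ω = 1 ∧ A ω = 1) := by
  unfold numW prW
  refine Finset.sum_congr rfl fun ω _ => ?_
  by_cases h1 : X ω = x <;> by_cases h2 : S ω = 1 <;> by_cases h3 : A ω = 1 <;>
    simp [h1, h2, h3]

lemma prW_split3 {𝒳 : Type*} (P S A : Ω → ℝ) (X : Ω → 𝒳) (x : 𝒳)
    (hA : ∀ ω, A ω = 0 ∨ A ω = 1) :
    prW P (fun ω => X ω = x ∧ S ω = 1 ∧ A ω = 1)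
      + prW P (fun ω => X ω = x ∧ S ω = 1 ∧ A ω = 0)
      = prW P (fun ω => X ω = x ∧ S ω = 1) := by
  unfold prW
  rw [← Finset.sum_add_distrib]
  refine Finset.sum_congr rfl fun ω _ => ?_
  rcases hA ω with h3 | h3 <;>
    by_cases h1 : X ω = x <;> by_cases h2 : S ω = 1 <;> simp [h1, h2, h3] <;> norm_num

lemma cexp_cross (P g : Ω → ℝ) (E F : Ω → Prop) (h : cexp P g E = cexp P g F)
    (hE : prW P E ≠ 0) (hF : prW P F ≠ 0) :
    numW P g E * prW P F = numW P g F * prW P E := by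
  rw [cexp_eq_numW_div, cexp_eq_numW_div, div_eq_div_iff hE hF] at h
  exact h

lemma numW_fiberwise {𝒳 𝒲 : Type*} (P : Ω → ℝ) (X : Ω → 𝒳) (f : 𝒳 → 𝒲)
    (g : Ω → ℝ) (w : 𝒲) :
    numW P g (fun ω => f (X ω) = w)
      = ∑ x ∈ Finset.univ.image X,
          if f x = w then numW P g (fun ω => X ω = x) else 0 := by
  classical
  unfold numW
  rw [← Finset.sum_fiberwise_of_maps_to
    (fun ω _ => Finset.mem_image_of_mem X (Finset.mem_univ ω))
    (fun ω => if f (X ω) = w then P ω * g ω else 0)]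
  refine Finset.sum_congr rfl fun x _ => ?_
  rw [Finset.sum_filter]
  by_cases hfx : f x = w
  · simp only [hfx, if_true]
    refine Finset.sum_congr rfl fun ω _ => ?_
    by_cases hx : X ω = x <;> simp [hx, hfx]
  · simp only [hfx, if_false]
    refine Finset.sum_eq_zero fun ω _ => ?_
    by_cases hx : X ω = x <;> simp [hx, hfx]

lemma fiber_rhs {𝒳 : Type*} (P S A Y Y0 Y1 : Ω → ℝ) (X : Ω → 𝒳) (e1 p : 𝒳 → ℝ)
    (x : 𝒳)
    (hS : ∀ ω, S ω = 0 ∨ S ω = 1) (hA : ∀ ω, A ω = 0 ∨ A ω = 1)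
    (hcons : ∀ ω, S ω = 1 → Y ω = A ω * Y1 ω + (1 - A ω) * Y0 ω)
    (hp0 : p x ≠ 0) (he0 : e1 x ≠ 0) (he0' : (1:ℝ) - e1 x ≠ 0) :
    numW P (fun ω => S ω * (A ω - e1 (X ω)) / (p (X ω) * e1 (X ω) * (1 - e1 (X ω))) * Y ω)
        (fun ω => X ω = x)
      = (p x * e1 x)⁻¹ * numW P Y1 (fun ω => X ω = x ∧ S ω = 1 ∧ A ω = 1)
        - (p x * (1 - e1 x))⁻¹ * numW P Y0 (fun ω => X ω = x ∧ S ω = 1 ∧ A ω = 0) := by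
  unfold numW
  rw [Finset.mul_sum, Finset.mul_sum, ← Finset.sum_sub_distrib]
  refine Finset.sum_congr rfl fun ω _ => ?_
  by_cases h1 : X ω = x
  · rcases hS ω with h2 | h2
    · have h2' : ¬ (S ω = (1:ℝ)) := by rw [h2]; norm_num
      simp [h1, h2, h2']
    · have hY := hcons ω h2
      rcases hA ω with h3 | h3
      · have h3' : ¬ (A ω = (1:ℝ)) := by rw [h3]; norm_num
        rw [h3] at hY
        simp only [h1, h2, h3, h3', hY, and_true, and_false, and_self, if_true, if_false,
          if_pos rfl, mul_one, mul_zero, sub_zero, zero_mul, one_mul, zero_add]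
        field_simp
        simp
      · rw [h3] at hY
        simp only [h1, h2, h3, hY, and_true, and_false, and_self, if_true, if_false,
          one_ne_zero, mul_one, mul_zero, sub_self, zero_mul, one_mul, add_zero,
          if_pos rfl]
        field_simp
        ring
  · simp [h1]

end Helpers

/-- IPW identification of the CATE in the target population: under consistency,
    mean exchangeability over `A` in the trial, mean exchangeability over `S`, and
    positivity, `E[Y¹ − Y⁰ | W=w]` equals the conditional mean of the IPW-weighted
    observed outcome, for `W = f(X)` a coarsening of `X`. -/



theorem ipw_identification_of_cate
    {Ω 𝒳 𝒲 : Type*} [Fintype Ω]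
    (P : Ω → ℝ) (hP0 : ∀ ω, 0 ≤ P ω) (hP1 : ∑ ω, P ω = 1)
    (S A Y Y0 Y1 : Ω → ℝ) (X : Ω → 𝒳) (f : 𝒳 → 𝒲)
    (hS : ∀ ω, S ω = 0 ∨ S ω = 1) (hA : ∀ ω, A ω = 0 ∨ A ω = 1)
    -- consistency: Y = A·Y¹ + (1−A)·Y⁰ on {S = 1}
    (hcons : ∀ ω, S ω = 1 → Y ω = A ω * Y1 ω + (1 - A ω) * Y0 ω)
    (e1 p : 𝒳 → ℝ)
    (hp : ∀ x, p x = cexp P (fun ω => if S ω = 1 then 1 else 0) (fun ω => X ω = x))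
    (he1 : ∀ x, e1 x = cexp P (fun ω => if A ω = 1 then 1 else 0)
      (fun ω => X ω = x ∧ S ω = 1))
    -- (i) mean exchangeability over A in the trial, for a = 1 and a = 0
    (hexchA1 : ∀ x, 0 < prW P (fun ω => X ω = x ∧ S ω = 1 ∧ A ω = 1) →
      cexp P Y1 (fun ω => X ω = x ∧ S ω = 1 ∧ A ω = 1)
        = cexp P Y1 (fun ω => X ω = x ∧ S ω = 1))
    (hexchA0 : ∀ x, 0 < prW P (fun ω => X ω = x ∧ S ω = 1 ∧ A ω = 0) →
      cexp P Y0 (fun ω => X ω = x ∧ S ω = 1 ∧ A ω = 0)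
        = cexp P Y0 (fun ω => X ω = x ∧ S ω = 1))
    -- (ii) mean exchangeability over S
    (hexchS : ∀ x, 0 < prW P (fun ω => X ω = x ∧ S ω = 1) →
      cexp P (fun ω => Y1 ω - Y0 ω) (fun ω => X ω = x ∧ S ω = 1)
        = cexp P (fun ω => Y1 ω - Y0 ω) (fun ω => X ω = x))
    -- (iii) positivity on the support of X
    (hpos : ∀ x, 0 < prW P (fun ω => X ω = x) → 0 < p x ∧ 0 < e1 x ∧ e1 x < 1) :
    ∀ w, 0 < prW P (fun ω => f (X ω) = w) →
      cexp P (fun ω => Y1 ω - Y0 ω) (fun ω => f (X ω) = w)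
        = cexp P
            (fun ω => S ω * (A ω - e1 (X ω)) / (p (X ω) * e1 (X ω) * (1 - e1 (X ω))) * Y ω)
            (fun ω => f (X ω) = w) := by
  classical
  intro w hw
  have fiber : ∀ x : 𝒳,
      numW P (fun ω => Y1 ω - Y0 ω) (fun ω => X ω = x)
        = numW P
            (fun ω => S ω * (A ω - e1 (X ω)) / (p (X ω) * e1 (X ω) * (1 - e1 (X ω))) * Y ω)
            (fun ω => X ω = x) := by
    intro x
    by_cases hπ : 0 < prW P (fun ω => X ω = x)
    · obtain ⟨hpx, he1x, he1x'⟩ := hpos x hπ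
      have hp0 : p x ≠ 0 := ne_of_gt hpx
      have he0 : e1 x ≠ 0 := ne_of_gt he1x
      have he0' : (1:ℝ) - e1 x ≠ 0 := by linarith
      have hπ' : prW P (fun ω => X ω = x) ≠ 0 := ne_of_gt hπ
      set π := prW P (fun ω => X ω = x) with hπdef
      set π1 := prW P (fun ω => X ω = x ∧ S ω = 1) with hπ1def
      set πa := prW P (fun ω => X ω = x ∧ S ω = 1 ∧ A ω = 1) with hπadef
      set πb := prW P (fun ω => X ω = x ∧ S ω = 1 ∧ A ω = 0) with hπbdef
      have hπ1 : π1 = p x * π := by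
        have h := hp x
        rw [cexp_eq_numW_div, numW_indS, ← hπ1def, ← hπdef] at h
        rw [h, div_mul_cancel₀ _ hπ']
      have hπ1pos : 0 < π1 := by rw [hπ1]; exact mul_pos hpx hπ
      have hπ1' : π1 ≠ 0 := ne_of_gt hπ1pos
      have hπa : πa = e1 x * π1 := by
        have h := he1 x
        rw [cexp_eq_numW_div, numW_indA, ← hπadef, ← hπ1def] at h
        rw [h, div_mul_cancel₀ _ hπ1']
      have hπb : πb = (1 - e1 x) * π1 := by
        have h := prW_split3 P S A X x hA
        rw [← hπadef, ← hπbdef, ← hπ1def, hπa] at h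
        linarith
      have hπapos : 0 < πa := by rw [hπa]; exact mul_pos he1x hπ1pos
      have hπbpos : 0 < πb := by rw [hπb]; exact mul_pos (by linarith) hπ1pos
      set Na := numW P Y1 (fun ω => X ω = x ∧ S ω = 1 ∧ A ω = 1) with hNadef
      set Nb := numW P Y0 (fun ω => X ω = x ∧ S ω = 1 ∧ A ω = 0) with hNbdef
      set N1 := numW P Y1 (fun ω => X ω = x ∧ S ω = 1) with hN1def
      set N0 := numW P Y0 (fun ω => X ω = x ∧ S ω = 1) with hN0def
      set M := numW P (fun ω => Y1 ω - Y0 ω) (fun ω => X ω = x) with hMdef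
      have hNaEq : Na = e1 x * N1 := by
        have h := cexp_cross P Y1 _ _ (hexchA1 x hπapos) (ne_of_gt hπapos) hπ1'
        rw [← hNadef, ← hN1def, ← hπadef, ← hπ1def, hπa] at h
        have h2 : Na * π1 = e1 x * N1 * π1 := by rw [h]; ring
        exact mul_right_cancel₀ hπ1' h2
      have hNbEq : Nb = (1 - e1 x) * N0 := by
        have h := cexp_cross P Y0 _ _ (hexchA0 x hπbpos) (ne_of_gt hπbpos) hπ1'
        rw [← hNbdef, ← hN0def, ← hπbdef, ← hπ1def, hπb] at h
        have h2 : Nb * π1 = (1 - e1 x) * N0 * π1 := by rw [h]; ring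
        exact mul_right_cancel₀ hπ1' h2
      have hMEq : N1 - N0 = p x * M := by
        have h := cexp_cross P (fun ω => Y1 ω - Y0 ω) _ _ (hexchS x hπ1pos) hπ1' hπ'
        rw [numW_sub, ← hN1def, ← hN0def, ← hMdef, ← hπ1def, ← hπdef, hπ1] at h
        have h2 : (N1 - N0) * π = p x * M * π := by rw [h]; ring
        exact mul_right_cancel₀ hπ' h2
      rw [fiber_rhs P S A Y Y0 Y1 X e1 p x hS hA hcons hp0 he0 he0',
        ← hNadef, ← hNbdef, hNaEq, hNbEq]
      have h3 : (p x * e1 x)⁻¹ * (e1 x * N1) - (p x * (1 - e1 x))⁻¹ * ((1 - e1 x) * N0)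
          = (N1 - N0) / p x := by
        field_simp
      rw [h3, hMEq, mul_comm (p x) M, mul_div_assoc, div_self hp0, mul_one]
    · have hπ0 : prW P (fun ω => X ω = x) = 0 :=
        le_antisymm (not_lt.mp hπ) (prW_nonneg P hP0 _)
      have hz := prW_zero_imp P hP0 _ hπ0
      rw [numW_zero P _ _ hz, numW_zero P _ _ hz]
  rw [cexp_eq_numW_div, cexp_eq_numW_div]
  congr 1
  rw [numW_fiberwise P X f _ w, numW_fiberwise P X f _ w]
  refine Finset.sum_congr rfl fun x _ => ?_
  by_cases hfx : f x = w
  · simp only [hfx, if_true]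
    exact fiber x
  · simp [hfx]
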